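/- Let t ∈ (0,1] and let k₁, k₂ ≥ 1 be integers. Then Σ_{r=0}^{k₁} Σ_{s=0}^{k₂} α^{(2k₁,t)}_{2k₁−2r} · α^{(2k₂,t)}_{2k₂−2s} · Σ_{l=1}^{min(k₁−r, k₂−s)} 2l · binom(2(k₁−r), k₁−r−l) · binom(2(k₂−s), k₂−s−l) · t^{(k₁−r)+(k₂−s)−2l} equals 2k₁ if k₁ = k₂, and equals 0 if k₁ ≠ k₂. -/

import Mathlib

open Polynomial

/-- The modified Chebyshev polynomials: `P₀ = 2`, `P₁ = X`,
`P_{k+2} = X·P_{k+1} − t·P_k`. -/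
noncomputable def modCheb (t : ℝ) : ℕ → Polynomial ℝ
  | 0 => 2
  | 1 => Polynomial.X
  | (k + 2) => Polynomial.X * modCheb t (k + 1) - Polynomial.C t * modCheb t k

open LaurentPolynomial

theorem modCheb_natDegree_le (t : ℝ) : ∀ n, (modCheb t n).natDegree ≤ n
  | 0 => by simp [modCheb]
  | 1 => by simp [modCheb]
  | (n + 2) => by
    have h1 := modCheb_natDegree_le t (n + 1)
    have h0 := modCheb_natDegree_le t n
    rw [modCheb]
    refine le_trans (natDegree_sub_le _ _) (max_le ?_ ?_)
    · exact le_trans (natDegree_mul_le) (by simp; omega)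
    · exact le_trans (natDegree_mul_le) (by simp; omega)

theorem T_mul_key (m : ℤ) :
    ((T 1 + T (-1)) * (T (m + 1) + T (-(m + 1))) : LaurentPolynomial ℝ)
      = T (m + 2) + T (-(m + 2)) + (T m + T (-m)) := by
  have h : ∀ a b : ℤ, (T a * T b : LaurentPolynomial ℝ) = T (a + b) := fun a b => (T_add a b).symm
  rw [add_mul, mul_add, mul_add, h, h, h, h,
    show (1 + (m + 1) : ℤ) = m + 2 by ring, show (1 + -(m + 1) : ℤ) = -m by ring,
    show (-1 + (m + 1) : ℤ) = m by ring, show (-1 + -(m + 1) : ℤ) = -(m + 2) by ring]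
  abel

theorem modCheb_aeval (t : ℝ) (ht : 0 ≤ t) : ∀ n,
    aeval (LaurentPolynomial.C (Real.sqrt t) * (T 1 + T (-1)) : LaurentPolynomial ℝ)
        (modCheb t n)
      = LaurentPolynomial.C (Real.sqrt t ^ n) * (T n + T (-n))
  | 0 => by
    simp only [modCheb, map_ofNat, pow_zero, Nat.cast_zero, neg_zero, T_zero]
    norm_num
  | 1 => by simp [modCheb]
  | (n + 2) => by
    have h1 := modCheb_aeval t ht (n + 1)
    have h0 := modCheb_aeval t ht n
    have hs : Real.sqrt t ^ 2 = t := Real.sq_sqrt ht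
    rw [modCheb, map_sub, map_mul, map_mul, aeval_X, aeval_C, h1, h0,
      ← LaurentPolynomial.C_eq_algebraMap]
    have key := T_mul_key (m := (n : ℤ))
    have hc1 : LaurentPolynomial.C (Real.sqrt t) * LaurentPolynomial.C (Real.sqrt t ^ (n + 1))
        = LaurentPolynomial.C (Real.sqrt t ^ (n + 2)) := by
      rw [← map_mul]; congr 1; ring
    have hc2 : LaurentPolynomial.C t * LaurentPolynomial.C (Real.sqrt t ^ n)
        = LaurentPolynomial.C (Real.sqrt t ^ (n + 2)) := by
      rw [← map_mul]; congr 1; linear_combination (-(Real.sqrt t ^ n)) * hs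
    push_cast
    linear_combination ((T 1 + T (-1)) * (T ((n : ℤ) + 1) + T (-((n : ℤ) + 1)))) * hc1
      - (T (n : ℤ) + T (-(n : ℤ))) * hc2 + LaurentPolynomial.C (Real.sqrt t ^ (n + 2)) * key

theorem C_mul_apply (r : ℝ) (f : LaurentPolynomial ℝ) (m : ℤ) :
    (LaurentPolynomial.C r * f).coeff m = r * f.coeff m := by
  rw [← single_eq_C, AddMonoidAlgebra.coeff_single_zero_mul]

theorem u_pow_apply (s : ℝ) (i : ℕ) (m : ℤ) :
    ((LaurentPolynomial.C s * (T 1 + T (-1))) ^ i : LaurentPolynomial ℝ).coeff m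
      = ∑ j ∈ Finset.range (i + 1),
          s ^ i * (i.choose j : ℝ) * (if (2 * j - i : ℤ) = m then 1 else 0) := by
  have hexp : ((LaurentPolynomial.C s * (T 1 + T (-1))) ^ i : LaurentPolynomial ℝ)
      = ∑ j ∈ Finset.range (i + 1),
          LaurentPolynomial.C (s ^ i * (i.choose j : ℝ)) * T (2 * j - i) := by
    rw [mul_pow, add_pow, Finset.mul_sum]
    refine Finset.sum_congr rfl fun j hj => ?_
    have hji : j ≤ i := by simpa [Nat.lt_succ_iff] using hj
    have h1 : (T 1 : LaurentPolynomial ℝ) ^ j = T (j : ℤ) := by rw [T_pow]; norm_num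
    have h2 : (T (-1) : LaurentPolynomial ℝ) ^ (i - j) = T (-((i : ℤ) - j)) := by
      rw [T_pow]; congr 1; push_cast [hji]; ring
    have h3 : ((i.choose j : ℕ) : LaurentPolynomial ℝ)
        = LaurentPolynomial.C ((i.choose j : ℕ) : ℝ) := by
      rw [map_natCast]
    have h4 : (T (j : ℤ) * T (-((i : ℤ) - j)) : LaurentPolynomial ℝ) = T (2 * j - i) := by
      rw [← T_add]; congr 1; ring
    rw [h1, h2, h3, ← map_pow, map_mul, ← h4]
    ring
  rw [hexp, AddMonoidAlgebra.coeff_sum, Finsupp.finset_sum_apply]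
  refine Finset.sum_congr rfl fun j _ => ?_
  rw [← single_eq_C_mul_T, AddMonoidAlgebra.coeff_single, Finsupp.single_apply]
  split_ifs <;> simp_all

theorem keyLemma (t : ℝ) (ht : 0 < t) (k l : ℕ) (hl : 1 ≤ l) :
    ∑ r ∈ Finset.range (k + 1), (modCheb t (2 * k)).coeff (2 * k - 2 * r) *
        (if l ≤ k - r then ((2 * (k - r)).choose (k - r - l) : ℝ) * t ^ (k - r) else 0)
      = if l = k then t ^ k else 0 := by
  set s := Real.sqrt t with hs_def
  have hs : s ^ 2 = t := Real.sq_sqrt ht.le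
  set u : LaurentPolynomial ℝ := LaurentPolynomial.C s * (T 1 + T (-1)) with hu
  set p := modCheb t (2 * k) with hp
  have hw : ∀ i : ℕ, (u ^ i).coeff (2 * (l : ℤ))
      = if i % 2 = 0 ∧ 2 * l ≤ i then s ^ i * ((i.choose (i / 2 + l)) : ℝ) else 0 := by
    intro i
    rw [hu, u_pow_apply]
    by_cases hcond : i % 2 = 0 ∧ 2 * l ≤ i
    · rw [if_pos hcond]
      rw [Finset.sum_eq_single (i / 2 + l)]
      · rw [if_pos (by push_cast; omega), mul_one]
      · intro j hj hne
        rw [if_neg (by push_cast; intro h; exact hne (by omega)), mul_zero]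
      · intro h
        exact absurd (Finset.mem_range.mpr (by omega)) h
    · rw [if_neg hcond]
      refine Finset.sum_eq_zero fun j hj => ?_
      have hj' : j ≤ i := by simpa [Nat.lt_succ_iff] using Finset.mem_range.mp hj
      rw [if_neg (by push_cast; intro h; exact hcond (by omega)), mul_zero]
  have hdeg : p.natDegree < 2 * k + 1 :=
    lt_of_le_of_lt (modCheb_natDegree_le t (2 * k)) (lt_add_one _)
  have hexp : aeval u p
      = ∑ i ∈ Finset.range (2 * k + 1), LaurentPolynomial.C (p.coeff i) * u ^ i := by
    conv_lhs => rw [Polynomial.as_sum_range' p (2 * k + 1) hdeg]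
    rw [map_sum]
    refine Finset.sum_congr rfl fun i _ => ?_
    rw [aeval_monomial, ← LaurentPolynomial.C_eq_algebraMap]
  have hA : aeval u p
      = LaurentPolynomial.C (s ^ (2 * k)) * (T ((2 * k : ℕ) : ℤ) + T (-((2 * k : ℕ) : ℤ))) :=
    modCheb_aeval t ht.le (2 * k)
  set v : LaurentPolynomial ℝ :=
    LaurentPolynomial.C (s ^ (2 * k)) * (T ((2 * k : ℕ) : ℤ) + T (-((2 * k : ℕ) : ℤ))) with hv
  have happly : ∑ i ∈ Finset.range (2 * k + 1), p.coeff i * ((u ^ i).coeff (2 * (l : ℤ)))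
      = if l = k then t ^ k else 0 := by
    have h1 : ∑ i ∈ Finset.range (2 * k + 1),
        (LaurentPolynomial.C (p.coeff i) * u ^ i).coeff (2 * (l : ℤ)) = v.coeff (2 * (l : ℤ)) := by
      rw [← Finsupp.finset_sum_apply, ← AddMonoidAlgebra.coeff_sum, ← hexp, hA]
    have h2 : v.coeff (2 * (l : ℤ)) = if l = k then t ^ k else 0 := by
      rw [hv, C_mul_apply, AddMonoidAlgebra.coeff_add, Finsupp.add_apply, T_apply, T_apply]
      by_cases hlk : l = k
      · subst hlk
        have c1 : ((2 * l : ℕ) : ℤ) = 2 * (l : ℤ) := by push_cast; ring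
        have c2 : ¬(-((2 * l : ℕ) : ℤ) = 2 * (l : ℤ)) := by push_cast; omega
        rw [if_pos c1, if_neg c2, if_pos rfl, pow_mul, hs]
        ring
      · have c1 : ¬(((2 * k : ℕ) : ℤ) = 2 * (l : ℤ)) := by push_cast; omega
        have c2 : ¬(-((2 * k : ℕ) : ℤ) = 2 * (l : ℤ)) := by push_cast; omega
        rw [if_neg c1, if_neg c2, if_neg hlk]
        ring
    rw [← h2, ← h1]
    exact Finset.sum_congr rfl fun i _ => (C_mul_apply _ _ _).symm
  -- restrict to even indices
  have himg : (Finset.range (k + 1)).image (fun a => 2 * a) ⊆ Finset.range (2 * k + 1) := by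
    intro i hi
    simp only [Finset.mem_image, Finset.mem_range] at hi ⊢
    obtain ⟨a, ha, rfl⟩ := hi
    omega
  have hinj : ∀ x ∈ Finset.range (k + 1), ∀ y ∈ Finset.range (k + 1),
      2 * x = 2 * y → x = y := fun x _ y _ h => by omega
  have heven : ∑ a ∈ Finset.range (k + 1), p.coeff (2 * a) * ((u ^ (2 * a)).coeff (2 * (l : ℤ)))
      = ∑ i ∈ Finset.range (2 * k + 1), p.coeff i * ((u ^ i).coeff (2 * (l : ℤ))) := by
    calc ∑ a ∈ Finset.range (k + 1), p.coeff (2 * a) * ((u ^ (2 * a)).coeff (2 * (l : ℤ)))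
        = ∑ i ∈ (Finset.range (k + 1)).image (fun a => 2 * a),
            p.coeff i * ((u ^ i).coeff (2 * (l : ℤ))) :=
          (Finset.sum_image (f := fun i => p.coeff i * ((u ^ i).coeff (2 * (l : ℤ))))
            (g := fun a => 2 * a) hinj).symm
      _ = ∑ i ∈ Finset.range (2 * k + 1), p.coeff i * ((u ^ i).coeff (2 * (l : ℤ))) := by
          refine Finset.sum_subset himg fun i hi hni => ?_
          have hodd : i % 2 = 1 := by
            rcases Nat.even_or_odd i with he | ho
            · exfalso
              obtain ⟨a, rfl⟩ := he
              have hik : a + a < 2 * k + 1 := Finset.mem_range.mp hi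
              exact hni (Finset.mem_image.mpr
                ⟨a, Finset.mem_range.mpr (by omega), by omega⟩)
            · exact Nat.odd_iff.mp ho
          rw [hw, if_neg (show ¬(i % 2 = 0 ∧ 2 * l ≤ i) by omega), mul_zero]
  -- value at even indices
  have hval : ∀ a : ℕ, (u ^ (2 * a)).coeff (2 * (l : ℤ))
      = if l ≤ a then ((2 * a).choose (a - l) : ℝ) * t ^ a else 0 := by
    intro a
    rw [hw]
    by_cases hla : l ≤ a
    · rw [if_pos ⟨by omega, by omega⟩, if_pos hla]
      have hch : (2 * a).choose (2 * a / 2 + l) = (2 * a).choose (a - l) := by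
        rw [show 2 * a / 2 + l = a + l by omega]
        rw [← Nat.choose_symm (by omega), show 2 * a - (a + l) = a - l by omega]
      rw [hch, pow_mul, hs]
      ring
    · rw [if_neg (by omega), if_neg hla]
  -- assemble
  set g : ℕ → ℝ := fun a => p.coeff (2 * a) *
    (if l ≤ a then ((2 * a).choose (a - l) : ℝ) * t ^ a else 0) with hg
  calc ∑ r ∈ Finset.range (k + 1), p.coeff (2 * k - 2 * r) *
        (if l ≤ k - r then ((2 * (k - r)).choose (k - r - l) : ℝ) * t ^ (k - r) else 0)
      = ∑ r ∈ Finset.range (k + 1), g (k + 1 - 1 - r) := by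
        refine Finset.sum_congr rfl fun r hr => ?_
        have hrk : r ≤ k := by simpa [Nat.lt_succ_iff] using Finset.mem_range.mp hr
        rw [hg]
        simp only
        rw [show k + 1 - 1 - r = k - r by omega, show 2 * (k - r) = 2 * k - 2 * r by omega]
    _ = ∑ a ∈ Finset.range (k + 1), g a := Finset.sum_range_reflect g (k + 1)
    _ = ∑ a ∈ Finset.range (k + 1), p.coeff (2 * a) * ((u ^ (2 * a)).coeff (2 * (l : ℤ))) :=
        Finset.sum_congr rfl fun a _ => by rw [hg]; simp only; rw [hval]
    _ = if l = k then t ^ k else 0 := by rw [heven, happly]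


/-- For `t ∈ (0,1]` and integers `k₁, k₂ ≥ 1`,
`Σ_{r,s} α^{(2k₁,t)}_{2k₁−2r} α^{(2k₂,t)}_{2k₂−2s}
  Σ_{l≥1} 2l·binom(2(k₁−r), k₁−r−l)·binom(2(k₂−s), k₂−s−l)·t^{(k₁−r)+(k₂−s)−2l}`
equals `2k₁` if `k₁ = k₂` and `0` otherwise. -/
theorem stmt_18 (t : ℝ) (ht0 : 0 < t) (ht1 : t ≤ 1) (k₁ k₂ : ℕ) (h₁ : 1 ≤ k₁) (h₂ : 1 ≤ k₂) :
    ∑ r ∈ Finset.range (k₁ + 1), ∑ s ∈ Finset.range (k₂ + 1),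
        (modCheb t (2 * k₁)).coeff (2 * k₁ - 2 * r) *
          (modCheb t (2 * k₂)).coeff (2 * k₂ - 2 * s) *
          ∑ l ∈ Finset.Icc 1 (min (k₁ - r) (k₂ - s)),
            (2 * l : ℝ) * ((2 * (k₁ - r)).choose (k₁ - r - l) : ℝ) *
              ((2 * (k₂ - s)).choose (k₂ - s - l) : ℝ) *
              t ^ ((k₁ - r) + (k₂ - s) - 2 * l)
      = if k₁ = k₂ then (2 * k₁ : ℝ) else 0 := by
  set M := min k₁ k₂ with hM
  set a : ℕ → ℝ := fun r => (modCheb t (2 * k₁)).coeff (2 * k₁ - 2 * r) with ha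
  set b : ℕ → ℝ := fun s => (modCheb t (2 * k₂)).coeff (2 * k₂ - 2 * s) with hb
  set F : ℕ → ℕ → ℝ := fun r l =>
    if l ≤ k₁ - r then ((2 * (k₁ - r)).choose (k₁ - r - l) : ℝ) * t ^ (k₁ - r) else 0 with hF
  set G : ℕ → ℕ → ℝ := fun s l =>
    if l ≤ k₂ - s then ((2 * (k₂ - s)).choose (k₂ - s - l) : ℝ) * t ^ (k₂ - s) else 0 with hG
  set c : ℕ → ℝ := fun l => (2 * l : ℝ) / t ^ (2 * l) with hc
  have htne : ∀ m : ℕ, t ^ m ≠ 0 := fun m => pow_ne_zero m ht0.ne'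
  -- Step 1: rewrite the inner sums
  have hinner : ∀ r s : ℕ,
      (∑ l ∈ Finset.Icc 1 (min (k₁ - r) (k₂ - s)),
        (2 * l : ℝ) * ((2 * (k₁ - r)).choose (k₁ - r - l) : ℝ) *
          ((2 * (k₂ - s)).choose (k₂ - s - l) : ℝ) * t ^ ((k₁ - r) + (k₂ - s) - 2 * l))
      = ∑ l ∈ Finset.Icc 1 M, F r l * G s l * c l := by
    intro r s
    have hsub : Finset.Icc 1 (min (k₁ - r) (k₂ - s)) ⊆ Finset.Icc 1 M := by
      intro l hl
      simp only [Finset.mem_Icc] at hl ⊢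
      omega
    rw [← Finset.sum_subset hsub (fun l hl hnl => ?_)]
    · refine Finset.sum_congr rfl fun l hl => ?_
      simp only [Finset.mem_Icc] at hl
      have hA : l ≤ k₁ - r := by omega
      have hB : l ≤ k₂ - s := by omega
      rw [hF, hG, hc]
      simp only
      rw [if_pos hA, if_pos hB]
      have hpow : t ^ ((k₁ - r) + (k₂ - s) - 2 * l)
          = t ^ (k₁ - r) * t ^ (k₂ - s) / t ^ (2 * l) := by
        rw [eq_div_iff (htne _), ← pow_add, ← pow_add]
        congr 1
        omega
      rw [hpow]
      ring
    · simp only [Finset.mem_Icc] at hl hnl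
      have : ¬(l ≤ k₁ - r) ∨ ¬(l ≤ k₂ - s) := by omega
      rw [hF, hG, hc]
      simp only
      rcases this with h | h
      · rw [if_neg h]; ring
      · rw [if_neg h]; ring
  -- Step 2: swap sums and factor
  have hfactor : ∀ l : ℕ,
      c l * (∑ r ∈ Finset.range (k₁ + 1), a r * F r l) *
        (∑ s ∈ Finset.range (k₂ + 1), b s * G s l)
      = ∑ r ∈ Finset.range (k₁ + 1), ∑ s ∈ Finset.range (k₂ + 1),
          a r * b s * (F r l * G s l * c l) := by
    intro l
    have hms := Finset.sum_mul_sum (Finset.range (k₁ + 1)) (Finset.range (k₂ + 1))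
      (fun r => a r * F r l) (fun s => b s * G s l)
    calc c l * (∑ r ∈ Finset.range (k₁ + 1), a r * F r l) *
          (∑ s ∈ Finset.range (k₂ + 1), b s * G s l)
        = c l * ((∑ r ∈ Finset.range (k₁ + 1), a r * F r l) *
            (∑ s ∈ Finset.range (k₂ + 1), b s * G s l)) := by ring
      _ = c l * ∑ r ∈ Finset.range (k₁ + 1), ∑ s ∈ Finset.range (k₂ + 1),
            (a r * F r l) * (b s * G s l) := by rw [hms]
      _ = ∑ r ∈ Finset.range (k₁ + 1), ∑ s ∈ Finset.range (k₂ + 1),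
            a r * b s * (F r l * G s l * c l) := by
          rw [Finset.mul_sum]
          refine Finset.sum_congr rfl fun r _ => ?_
          rw [Finset.mul_sum]
          exact Finset.sum_congr rfl fun s _ => by ring
  -- Step 3: evaluate the r- and s-sums via the key lemma
  have hkey1 : ∀ l : ℕ, 1 ≤ l →
      (∑ r ∈ Finset.range (k₁ + 1), a r * F r l) = if l = k₁ then t ^ k₁ else 0 :=
    fun l hl => keyLemma t ht0 k₁ l hl
  have hkey2 : ∀ l : ℕ, 1 ≤ l →
      (∑ s ∈ Finset.range (k₂ + 1), b s * G s l) = if l = k₂ then t ^ k₂ else 0 :=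
    fun l hl => keyLemma t ht0 k₂ l hl
  -- Assemble
  calc ∑ r ∈ Finset.range (k₁ + 1), ∑ s ∈ Finset.range (k₂ + 1),
        (modCheb t (2 * k₁)).coeff (2 * k₁ - 2 * r) *
          (modCheb t (2 * k₂)).coeff (2 * k₂ - 2 * s) *
          ∑ l ∈ Finset.Icc 1 (min (k₁ - r) (k₂ - s)),
            (2 * l : ℝ) * ((2 * (k₁ - r)).choose (k₁ - r - l) : ℝ) *
              ((2 * (k₂ - s)).choose (k₂ - s - l) : ℝ) *
              t ^ ((k₁ - r) + (k₂ - s) - 2 * l)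
      = ∑ r ∈ Finset.range (k₁ + 1), ∑ s ∈ Finset.range (k₂ + 1),
          ∑ l ∈ Finset.Icc 1 M, a r * b s * (F r l * G s l * c l) := by
        refine Finset.sum_congr rfl fun r _ => Finset.sum_congr rfl fun s _ => ?_
        rw [hinner r s, Finset.mul_sum]
    _ = ∑ r ∈ Finset.range (k₁ + 1), ∑ l ∈ Finset.Icc 1 M,
          ∑ s ∈ Finset.range (k₂ + 1), a r * b s * (F r l * G s l * c l) :=
        Finset.sum_congr rfl fun r _ => Finset.sum_comm
    _ = ∑ l ∈ Finset.Icc 1 M, ∑ r ∈ Finset.range (k₁ + 1),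
          ∑ s ∈ Finset.range (k₂ + 1), a r * b s * (F r l * G s l * c l) :=
        Finset.sum_comm
    _ = ∑ l ∈ Finset.Icc 1 M,
          c l * (if l = k₁ then t ^ k₁ else 0) * (if l = k₂ then t ^ k₂ else 0) := by
        refine Finset.sum_congr rfl fun l hl => ?_
        have hl1 : 1 ≤ l := (Finset.mem_Icc.mp hl).1
        rw [← hfactor l, hkey1 l hl1, hkey2 l hl1]
    _ = if k₁ = k₂ then (2 * k₁ : ℝ) else 0 := by
        by_cases hk : k₁ = k₂
        · subst hk
          rw [if_pos rfl]
          rw [Finset.sum_eq_single k₁]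
          · have hpow : t ^ (2 * k₁) = t ^ k₁ * t ^ k₁ := by rw [two_mul, pow_add]
            rw [if_pos rfl, hc]
            simp only
            rw [hpow]
            field_simp
          · intro l _ hne
            rw [if_neg hne]
            ring
          · intro hnotmem
            exact absurd (Finset.mem_Icc.mpr ⟨h₁, by omega⟩) hnotmem
        · rw [if_neg hk]
          refine Finset.sum_eq_zero fun l _ => ?_
          by_cases hl2 : l = k₂
          · rw [if_neg (by omega : ¬ l = k₁)]
            ring
          · rw [if_neg hl2]
            ring
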